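/- Let m ≥ 1 and let G be a finite simple graph with m edges and no isolated vertices such that h(G) ≥ h(G') for every finite simple graph G' with m edges. Then G is a threshold graph: the vertices of G can be partitioned into a set K inducing a clique and a set S that is a stable (independent) set, such that the neighborhoods of the vertices of S are nested (i.e., for any u, v ∈ S, N(u) ⊆ N(v) or N(v) ⊆ N(u)). -/

import Mathlib

open Finset

/-- `f x = x * log x` (note `Real.log 0 = 0`, so `f 0 = 0`). -/
noncomputable def f (x : ℝ) : ℝ := x * Real.log x

lemma f_slope_lt {a b : ℝ} (hb : 1 ≤ b) (hba : b ≤ a) :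
    f b + f a < f (b - 1) + f (a + 1) := by
  have hC := Real.strictConvexOn_mul_log
  have h1 : (0:ℝ) ≤ b - 1 := by linarith
  have key1 := hC.slope_strict_mono_adjacent (Set.mem_Ici.2 h1)
    (Set.mem_Ici.2 (show (0:ℝ) ≤ a + 1 by linarith))
    (show b - 1 < b by linarith) (show b < a + 1 by linarith)
  have key2 := hC.convexOn.secant_mono (Set.mem_Ici.2 (show (0:ℝ) ≤ a + 1 by linarith))
    (Set.mem_Ici.2 (show (0:ℝ) ≤ b by linarith)) (Set.mem_Ici.2 (show (0:ℝ) ≤ a by linarith))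
    (show b ≠ a + 1 by intro h; linarith) (show a ≠ a + 1 by intro h; linarith) hba
  have hd : (0:ℝ) < a + 1 - b := by linarith
  have e0 : b - (b - 1) = 1 := by ring
  rw [e0, div_one] at key1
  have e1 : (b * Real.log b - (a+1) * Real.log (a+1)) / (b - (a + 1))
      = ((a+1) * Real.log (a+1) - b * Real.log b) / (a + 1 - b) := by
    rw [← neg_div_neg_eq]; ring_nf
  have e2 : a - (a + 1) = -1 := by ring
  rw [e1, e2] at key2
  rw [div_neg, div_one, neg_sub] at key2
  have key3 : b * Real.log b - (b-1) * Real.log (b-1) < (a+1) * Real.log (a+1) - a * Real.log a := by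
    calc b * Real.log b - (b-1) * Real.log (b-1)
        < ((a+1) * Real.log (a+1) - b * Real.log b) / (a + 1 - b) := key1
      _ ≤ (a+1) * Real.log (a+1) - a * Real.log a := key2
  simp only [f]; linarith

lemma f_nat_lt {a b : ℕ} (hb : 1 ≤ b) (hba : b ≤ a) :
    f b + f a < f ((b - 1 : ℕ) : ℝ) + f ((a + 1 : ℕ) : ℝ) := by
  have := f_slope_lt (a := (a:ℝ)) (b := (b:ℝ)) (by exact_mod_cast hb) (by exact_mod_cast hba)
  rwa [show ((b:ℝ) - 1) = ((b - 1 : ℕ) : ℝ) by push_cast [Nat.cast_sub hb]; ring,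
    show ((a:ℝ) + 1) = ((a + 1 : ℕ) : ℝ) by push_cast; ring] at this

section Swap
variable {V : Type*}

/-- The graph obtained from `G` by deleting the edge `vy` and adding the edge `uy`. -/
def swapGraph (G : SimpleGraph V) (u v y : V) (hyu : y ≠ u) : SimpleGraph V where
  Adj a b := (G.Adj a b ∧ ¬(a = v ∧ b = y) ∧ ¬(a = y ∧ b = v)) ∨ (a = u ∧ b = y) ∨ (a = y ∧ b = u)
  symm := by
    constructor
    intro a b h
    rcases h with ⟨h1, h2, h3⟩ | ⟨h1, h2⟩ | ⟨h1, h2⟩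
    · exact Or.inl ⟨h1.symm, by tauto, by tauto⟩
    · exact Or.inr (Or.inr ⟨h2, h1⟩)
    · exact Or.inr (Or.inl ⟨h2, h1⟩)
  loopless := by
    constructor
    intro a h
    rcases h with ⟨h1, _, _⟩ | ⟨h1, h2⟩ | ⟨h1, h2⟩
    · exact G.loopless.irrefl a h1
    · exact hyu (h2.symm.trans h1)
    · exact hyu (h1.symm.trans h2)

instance swapGraph.instDecidableRel [DecidableEq V] (G : SimpleGraph V) [DecidableRel G.Adj]
    (u v y : V) (hyu : y ≠ u) : DecidableRel (swapGraph G u v y hyu).Adj :=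
  fun _ _ => inferInstanceAs (Decidable (_ ∨ _))

variable [Fintype V] [DecidableEq V] (G : SimpleGraph V) [DecidableRel G.Adj]

lemma swap_nbr_u {u v y : V} (huv : u ≠ v) (hvy : G.Adj v y) (hyu : y ≠ u) :
    (swapGraph G u v y hyu).neighborFinset u = insert y (G.neighborFinset u) := by
  have h1 : ¬ u = v := huv
  have h2 : ¬ u = y := Ne.symm hyu
  ext b
  rw [SimpleGraph.mem_neighborFinset]
  simp only [SimpleGraph.mem_neighborFinset, Finset.mem_insert, swapGraph, h1, h2]
  tauto

lemma swap_nbr_v {u v y : V} (huv : u ≠ v) (hvy : G.Adj v y) (hyu : y ≠ u) :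
    (swapGraph G u v y hyu).neighborFinset v = (G.neighborFinset v).erase y := by
  have h1 : ¬ v = u := Ne.symm huv
  have h2 : ¬ v = y := hvy.ne
  ext b
  rw [SimpleGraph.mem_neighborFinset]
  simp only [SimpleGraph.mem_neighborFinset, Finset.mem_erase, swapGraph, h1, h2]
  tauto

lemma swap_nbr_y {u v y : V} (huv : u ≠ v) (hvy : G.Adj v y) (hyu : y ≠ u) :
    (swapGraph G u v y hyu).neighborFinset y = insert u ((G.neighborFinset y).erase v) := by
  have h1 : ¬ y = v := Ne.symm hvy.ne
  have h2 : ¬ y = u := hyu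
  ext b
  rw [SimpleGraph.mem_neighborFinset]
  simp only [SimpleGraph.mem_neighborFinset, Finset.mem_insert, Finset.mem_erase, swapGraph,
    h1, h2]
  tauto

lemma swap_nbr_other {u v y : V} (hyu : y ≠ u) {w : V} (hwu : w ≠ u) (hwv : w ≠ v) (hwy : w ≠ y) :
    (swapGraph G u v y hyu).neighborFinset w = G.neighborFinset w := by
  have h1 : ¬ w = u := hwu
  have h2 : ¬ w = v := hwv
  have h3 : ¬ w = y := hwy
  ext b
  rw [SimpleGraph.mem_neighborFinset]
  simp only [SimpleGraph.mem_neighborFinset, swapGraph, h1, h2, h3]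
  tauto

lemma swap_deg_u {u v y : V} (huv : u ≠ v) (hvy : G.Adj v y) (hyu : y ≠ u) (huy : ¬ G.Adj u y) :
    (swapGraph G u v y hyu).degree u = G.degree u + 1 := by
  rw [← SimpleGraph.card_neighborFinset_eq_degree, swap_nbr_u G huv hvy hyu,
    Finset.card_insert_of_notMem (by simpa using huy)]
  rfl

lemma swap_deg_v {u v y : V} (huv : u ≠ v) (hvy : G.Adj v y) (hyu : y ≠ u) :
    (swapGraph G u v y hyu).degree v = G.degree v - 1 := by
  rw [← SimpleGraph.card_neighborFinset_eq_degree, swap_nbr_v G huv hvy hyu,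
    Finset.card_erase_of_mem (by simpa using hvy)]
  rfl

lemma swap_deg_y {u v y : V} (huv : u ≠ v) (hvy : G.Adj v y) (hyu : y ≠ u) (huy : ¬ G.Adj u y) :
    (swapGraph G u v y hyu).degree y = G.degree y := by
  have hu_not : u ∉ (G.neighborFinset y).erase v := by
    simp only [Finset.mem_erase, SimpleGraph.mem_neighborFinset]
    rintro ⟨-, h⟩
    exact huy h.symm
  have hd : 1 ≤ #(G.neighborFinset y) :=
    Finset.card_pos.2 ⟨v, by simpa using hvy.symm⟩
  rw [← SimpleGraph.card_neighborFinset_eq_degree, swap_nbr_y G huv hvy hyu,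
    Finset.card_insert_of_notMem hu_not,
    Finset.card_erase_of_mem (by simpa using hvy.symm),
    ← SimpleGraph.card_neighborFinset_eq_degree]
  omega

lemma swap_deg_other {u v y : V} (hyu : y ≠ u) {w : V} (hwu : w ≠ u) (hwv : w ≠ v) (hwy : w ≠ y) :
    (swapGraph G u v y hyu).degree w = G.degree w := by
  rw [← SimpleGraph.card_neighborFinset_eq_degree, swap_nbr_other G hyu hwu hwv hwy]
  rfl

end Swap

section Sums
variable {V : Type*} [Fintype V] [DecidableEq V]

lemma sum_split {u v y : V} (huv : u ≠ v) (hyu : y ≠ u) (hyv : y ≠ v)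
    {M : Type*} [AddCommMonoid M] (φ : V → M) :
    ∑ w, φ w = φ u + (φ v + (φ y + ∑ w ∈ ((univ.erase u).erase v).erase y, φ w)) := by
  rw [Finset.add_sum_erase _ φ (show y ∈ (univ.erase u).erase v by simp [hyu, hyv]),
    Finset.add_sum_erase _ φ (show v ∈ univ.erase u by simp [Ne.symm huv]),
    Finset.add_sum_erase _ φ (Finset.mem_univ u)]

end Sums

section SwapSums
variable {V : Type*} [Fintype V] [DecidableEq V] (G : SimpleGraph V) [DecidableRel G.Adj]

lemma swap_sums {u v y : V} (huv : u ≠ v) (hvy : G.Adj v y) (hyu : y ≠ u) (huy : ¬ G.Adj u y)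
    (hd : G.degree v ≤ G.degree u) :
    (∑ w, (swapGraph G u v y hyu).degree w = ∑ w, G.degree w) ∧
    (∑ w, f (G.degree w) < ∑ w, f ((swapGraph G u v y hyu).degree w)) := by
  have hyv : y ≠ v := Ne.symm hvy.ne
  have hdv : 1 ≤ G.degree v := by
    rw [← SimpleGraph.card_neighborFinset_eq_degree]
    exact Finset.card_pos.2 ⟨y, by simpa using hvy⟩
  have hrest : ∀ {M : Type} [AddCommMonoid M] (ψ : ℕ → M),
      ∑ w ∈ ((univ.erase u).erase v).erase y, ψ ((swapGraph G u v y hyu).degree w)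
        = ∑ w ∈ ((univ.erase u).erase v).erase y, ψ (G.degree w) := by
    intro M _ ψ
    refine Finset.sum_congr rfl fun w hw => ?_
    simp only [Finset.mem_erase] at hw
    rw [swap_deg_other G hyu hw.2.2.1 hw.2.1 hw.1]
  constructor
  · rw [sum_split huv hyu hyv, sum_split huv hyu hyv (φ := fun w => G.degree w),
      swap_deg_u G huv hvy hyu huy, swap_deg_v G huv hvy hyu, swap_deg_y G huv hvy hyu huy,
      hrest (fun n => n)]
    omega
  · rw [sum_split huv hyu hyv (φ := fun w => f ((swapGraph G u v y hyu).degree w)),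
      sum_split huv hyu hyv (φ := fun w => f (G.degree w)),
      swap_deg_u G huv hvy hyu huy, swap_deg_v G huv hvy hyu, swap_deg_y G huv hvy hyu huy,
      hrest (fun n => f n)]
    have := f_nat_lt hdv hd
    linarith
end SwapSums

lemma my_handshake {V : Type*} [Fintype V] (G : SimpleGraph V) [DecidableRel G.Adj]
    [i : Fintype G.edgeSet] : ∑ v, G.degree v = 2 * G.edgeFinset.card := by
  have hE : ∀ (i1 i2 : Fintype G.edgeSet),
      @SimpleGraph.edgeFinset V G i1 = @SimpleGraph.edgeFinset V G i2 := by
    intro i1 i2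
    ext e
    simp only [SimpleGraph.mem_edgeFinset]
  rw [SimpleGraph.sum_degrees_eq_twice_card_edges G, hE _ i]

/-- If `G` has `m ≥ 1` edges, no isolated vertices, and maximizes
`h(G) = ∑ v, f (deg v)` among all graphs with `m` edges, then `G` is a threshold graph:
its vertex set is partitioned into a clique `K` and a stable set `S` such that the
neighborhoods of the vertices of `S` are nested. -/
theorem h_maximizer_is_threshold {V : Type*} [Fintype V] (G : SimpleGraph V)
    [DecidableRel G.Adj] [Fintype G.edgeSet]
    (m : ℕ) (hm : 1 ≤ m) (hedges : G.edgeFinset.card = m)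
    (hniso : ∀ v, 0 < G.degree v)
    (hmax : ∀ (W : Type) [Fintype W] [DecidableEq W] (G' : SimpleGraph W)
      [DecidableRel G'.Adj], G'.edgeFinset.card = m →
        ∑ w, f (G'.degree w) ≤ ∑ v, f (G.degree v)) :
    ∃ K S : Set V, K ∪ S = Set.univ ∧ K ∩ S = ∅ ∧
      G.IsClique K ∧
      (∀ u ∈ S, ∀ v ∈ S, u ≠ v → ¬ G.Adj u v) ∧
      (∀ u ∈ S, ∀ v ∈ S, G.neighborSet u ⊆ G.neighborSet v ∨
        G.neighborSet v ⊆ G.neighborSet u) := by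
  classical
  -- Key step: if `deg v ≤ deg u` then every neighbor of `v` other than `u` is a neighbor of `u`.
  have key : ∀ u v : V, u ≠ v → G.degree v ≤ G.degree u →
      ∀ y, G.Adj v y → y ≠ u → G.Adj u y := by
    intro u v huv hd y hvy hyu
    by_contra huy
    obtain ⟨hdegsum, hflt⟩ := swap_sums G huv hvy hyu huy hd
    set H := swapGraph G u v y hyu with hH
    haveI : Fintype H.edgeSet := inferInstance
    have hcard : H.edgeFinset.card = m := by
      have h2 := my_handshake H
      have h1 := my_handshake G
      rw [hdegsum, h1, hedges] at h2
      omega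
    set n := Fintype.card V with hn
    let H' := H.overFin (n := n) rfl
    haveI : DecidableRel H'.Adj := fun a b => Classical.dec _
    let iso : H ≃g H' := H.overFinIso rfl
    have hcard' : H'.edgeFinset.card = m := (iso.card_edgeFinset_eq).symm.trans hcard
    have hdeg' : ∀ w : V, H'.degree (iso w) = H.degree w := fun w => by
      rw [← SimpleGraph.card_neighborSet_eq_degree, ← SimpleGraph.card_neighborSet_eq_degree]
      exact (Fintype.card_congr (iso.mapNeighborSet w)).symm
    have hsum' : ∑ w : Fin n, f (H'.degree w) = ∑ w : V, f (H.degree w) := by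
      rw [← Equiv.sum_comp iso.toEquiv (fun w => f (H'.degree w))]
      exact Finset.sum_congr rfl fun w _ => by rw [show iso.toEquiv w = iso w from rfl, hdeg' w]
    have := hmax (Fin n) H' hcard'
    rw [hsum'] at this
    linarith
  -- The vicinal preorder `P a b`: every neighbor of `a` other than `b` is a neighbor of `b`.
  set P : V → V → Prop := fun a b => ∀ x, G.Adj a x → x ≠ b → G.Adj b x with hPdef
  have hP : ∀ a b : V, G.degree a ≤ G.degree b → P a b := by
    intro a b hd
    rcases eq_or_ne a b with rfl | hab
    · exact fun x hax _ => hax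
    · exact fun x hax hxb => key b a hab.symm hd x hax hxb
  have htot : ∀ a b : V, P a b ∨ P b a := fun a b =>
    (le_total (G.degree a) (G.degree b)).imp (hP a b) (hP b a)
  set K : Set V := {v | ∀ u, u ≠ v → P v u → G.Adj v u} with hKdef
  have hstab : ∀ a ∈ Kᶜ, ∀ b ∈ Kᶜ, a ≠ b → ¬ G.Adj a b := by
    intro a haS b hbS hab hadj
    have hmemS : ∀ c ∈ (Kᶜ : Set V), ∃ w, w ≠ c ∧ P c w ∧ ¬ G.Adj c w := by
      intro c hcS
      by_contra hcon
      push_neg at hcon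
      exact hcS fun w hwc hPcw => hcon w hwc hPcw
    rcases htot a b with hPab | hPba
    · obtain ⟨w, hwb, hPbw, hnadj⟩ := hmemS b hbS
      rcases eq_or_ne a w with rfl | haw
      · exact hnadj hadj.symm
      · exact hnadj (hPab w (G.adj_symm (hPbw a hadj.symm haw)) hwb)
    · obtain ⟨w, hwa, hPaw, hnadj⟩ := hmemS a haS
      rcases eq_or_ne b w with rfl | hbw
      · exact hnadj hadj
      · exact hnadj (hPba w (G.adj_symm (hPaw b hadj hbw)) hwa)
  refine ⟨K, Kᶜ, Set.union_compl_self K, Set.inter_compl_self K, ?_, hstab, ?_⟩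
  · intro a ha b hb hab
    rcases htot a b with hPab | hPba
    · exact ha b (Ne.symm hab) hPab
    · exact G.adj_symm (hb a hab hPba)
  · intro a haS b hbS
    rcases eq_or_ne a b with rfl | hab
    · exact Or.inl subset_rfl
    rcases htot a b with hPab | hPba
    · refine Or.inl fun x hx => ?_
      have hxb : x ≠ b := fun h => hstab a haS b hbS hab (h ▸ hx)
      exact hPab x hx hxb
    · refine Or.inr fun x hx => ?_
      have hxa : x ≠ a := fun h => hstab a haS b hbS hab (G.adj_symm (h ▸ hx))
      exact hPba x hx hxa
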